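/- Let G be a finite additive abelian group of cardinality N, let A ⊆ G, and let η > 0. Suppose that for every nontrivial additive character γ of G (i.e., every group homomorphism γ from G to the nonzero complex numbers that is not identically 1) one has |∑_{x ∈ A} γ(−x)| ≤ N^(1−η). Then for every S ⊆ G, | #{(x, x') ∈ S × S : x + x' ∈ A} − |A|·|S|²/N | ≤ N^(1−η)·|S|. -/

import Mathlib

open Finset

theorem pseudorandom_sum_count {G : Type*} [AddCommGroup G] [Fintype G] [DecidableEq G]
    (N : ℕ) (hN : Fintype.card G = N) (A : Finset G) (η : ℝ) (hη : 0 < η)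
    (hA : ∀ γ : AddChar G ℂ, (¬ ∀ x : G, γ x = 1) →
      ‖∑ x ∈ A, γ (-x)‖ ≤ (N : ℝ) ^ ((1 : ℝ) - η)) :
    ∀ S : Finset G,
      |(((S ×ˢ S).filter fun p => p.1 + p.2 ∈ A).card : ℝ) -
          (A.card : ℝ) * (S.card : ℝ) ^ 2 / (N : ℝ)| ≤
        (N : ℝ) ^ ((1 : ℝ) - η) * (S.card : ℝ) := by
  intro S
  classical
  have hN0 : 0 < N := hN ▸ Fintype.card_pos
  have hNR : (0 : ℝ) < (N : ℝ) := by exact_mod_cast hN0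
  set K : ℝ := (N : ℝ) ^ ((1 : ℝ) - η) with hK
  have hK0 : 0 ≤ K := Real.rpow_nonneg (Nat.cast_nonneg N) _
  set c : AddChar G ℂ → ℂ := fun γ => ∑ a ∈ A, γ (-a) with hc
  set t : AddChar G ℂ → ℂ := fun γ => ∑ x ∈ S, γ x with ht
  set C : ℕ := ((S ×ˢ S).filter fun p => p.1 + p.2 ∈ A).card with hC
  -- key identity: ∑_γ t γ * t γ * c γ = N * C
  have key : ∑ γ : AddChar G ℂ, t γ * t γ * c γ = (N : ℂ) * C := by
    have h1 : ∀ γ : AddChar G ℂ, t γ * t γ * c γ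
        = ∑ a ∈ A, ∑ x ∈ S, ∑ y ∈ S, γ (x + y - a) := by
      intro γ
      simp only [hc, ht]
      rw [mul_comm, Finset.sum_mul]
      refine Finset.sum_congr rfl fun a _ => ?_
      rw [Finset.sum_mul_sum, Finset.mul_sum]
      refine Finset.sum_congr rfl fun x _ => ?_
      rw [Finset.mul_sum]
      refine Finset.sum_congr rfl fun y _ => ?_
      rw [sub_eq_add_neg, AddChar.map_add_eq_mul, AddChar.map_add_eq_mul]
      ring
    have hCsum : (C : ℂ) = ∑ x ∈ S, ∑ y ∈ S, (if x + y ∈ A then (1 : ℂ) else 0) := by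
      rw [hC, Finset.card_filter, Finset.sum_product]
      push_cast
      rfl
    calc ∑ γ : AddChar G ℂ, t γ * t γ * c γ
        = ∑ γ : AddChar G ℂ, ∑ a ∈ A, ∑ x ∈ S, ∑ y ∈ S, γ (x + y - a) := by
          exact Finset.sum_congr rfl fun γ _ => h1 γ
      _ = ∑ a ∈ A, ∑ x ∈ S, ∑ y ∈ S, ∑ γ : AddChar G ℂ, γ (x + y - a) := by
          rw [Finset.sum_comm]
          refine Finset.sum_congr rfl fun a _ => ?_
          rw [Finset.sum_comm]
          refine Finset.sum_congr rfl fun x _ => ?_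
          rw [Finset.sum_comm]
      _ = ∑ a ∈ A, ∑ x ∈ S, ∑ y ∈ S, (if x + y = a then (N : ℂ) else 0) := by
          refine Finset.sum_congr rfl fun a _ => Finset.sum_congr rfl fun x _ =>
            Finset.sum_congr rfl fun y _ => ?_
          rw [AddChar.sum_apply_eq_ite, hN]
          simp only [sub_eq_zero]
      _ = ∑ x ∈ S, ∑ y ∈ S, ∑ a ∈ A, (if x + y = a then (N : ℂ) else 0) := by
          rw [Finset.sum_comm]
          exact Finset.sum_congr rfl fun x _ => Finset.sum_comm
      _ = ∑ x ∈ S, ∑ y ∈ S, (if x + y ∈ A then (N : ℂ) else 0) := by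
          refine Finset.sum_congr rfl fun x _ => Finset.sum_congr rfl fun y _ => ?_
          rw [Finset.sum_ite_eq A (x + y) (fun _ => (N : ℂ))]
      _ = (N : ℂ) * C := by
          rw [hCsum, Finset.mul_sum]
          refine Finset.sum_congr rfl fun x _ => ?_
          rw [Finset.mul_sum]
          refine Finset.sum_congr rfl fun y _ => ?_
          split <;> simp
  -- Parseval identity
  have pars : ∑ γ : AddChar G ℂ, (Complex.normSq (t γ) : ℂ) = (N : ℂ) * S.card := by
    have h2 : ∀ γ : AddChar G ℂ, (Complex.normSq (t γ) : ℂ)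
        = ∑ x ∈ S, ∑ y ∈ S, γ (x - y) := by
      intro γ
      rw [← Complex.mul_conj]
      have : (starRingEnd ℂ) (t γ) = ∑ y ∈ S, γ (-y) := by
        rw [ht]
        simp only [map_sum]
        exact Finset.sum_congr rfl fun y _ => (AddChar.map_neg_eq_conj γ y).symm
      rw [this, ht, Finset.sum_mul_sum]
      refine Finset.sum_congr rfl fun x _ => Finset.sum_congr rfl fun y _ => ?_
      rw [sub_eq_add_neg, AddChar.map_add_eq_mul]
    calc ∑ γ : AddChar G ℂ, (Complex.normSq (t γ) : ℂ)
        = ∑ γ : AddChar G ℂ, ∑ x ∈ S, ∑ y ∈ S, γ (x - y) :=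
          Finset.sum_congr rfl fun γ _ => h2 γ
      _ = ∑ x ∈ S, ∑ y ∈ S, ∑ γ : AddChar G ℂ, γ (x - y) := by
          rw [Finset.sum_comm]
          refine Finset.sum_congr rfl fun x _ => ?_
          rw [Finset.sum_comm]
      _ = ∑ x ∈ S, ∑ y ∈ S, (if x = y then (N : ℂ) else 0) := by
          refine Finset.sum_congr rfl fun x _ => Finset.sum_congr rfl fun y _ => ?_
          rw [AddChar.sum_apply_eq_ite, hN]
          simp only [sub_eq_zero]
      _ = (N : ℂ) * S.card := by
          have h3 : ∀ x ∈ S, (∑ y ∈ S, if x = y then (N : ℂ) else 0) = (N : ℂ) := by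
            intro x hx
            rw [Finset.sum_ite_eq S x (fun _ => (N : ℂ)), if_pos hx]
          rw [Finset.sum_congr rfl h3, Finset.sum_const, nsmul_eq_mul, mul_comm]
  have parsR : ∑ γ : AddChar G ℂ, Complex.normSq (t γ) = (N : ℝ) * S.card := by
    have := pars
    push_cast at this ⊢
    exact_mod_cast this
  -- split off the trivial character
  set E : ℂ := ∑ γ ∈ Finset.univ.erase (0 : AddChar G ℂ), t γ * t γ * c γ with hE
  have split := Finset.sum_erase_add Finset.univ (fun γ => t γ * t γ * c γ)
    (Finset.mem_univ (0 : AddChar G ℂ))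
  have e0c : c 0 = (A.card : ℂ) := by simp [hc]
  have e0t : t 0 = (S.card : ℂ) := by simp [ht]
  have hEval : E = (N : ℂ) * C - (A.card : ℂ) * (S.card : ℂ) ^ 2 := by
    have h4 : E + t 0 * t 0 * c 0 = (N : ℂ) * C := by rw [hE]; rw [split, key]
    rw [e0c, e0t] at h4
    linear_combination h4
  have hNC : ((N : ℂ)) ≠ 0 := by exact_mod_cast hN0.ne'
  -- express the deviation
  have hD : (((C : ℝ) - (A.card : ℝ) * (S.card : ℝ) ^ 2 / (N : ℝ)) : ℂ) = E / (N : ℂ) := by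
    rw [hEval]
    push_cast
    field_simp
  -- bound E
  have hEb : ‖E‖ ≤ K * ((N : ℝ) * S.card) := by
    calc ‖E‖ ≤ ∑ γ ∈ Finset.univ.erase (0 : AddChar G ℂ),
          ‖t γ * t γ * c γ‖ := by
          rw [hE]; exact norm_sum_le _ _
      _ ≤ ∑ γ ∈ Finset.univ.erase (0 : AddChar G ℂ), K * Complex.normSq (t γ) := by
          refine Finset.sum_le_sum fun γ hγ => ?_
          have hγ0 : γ ≠ 0 := Finset.ne_of_mem_erase hγ
          have hnt : ¬ ∀ x : G, γ x = 1 := fun h => hγ0 (AddChar.ext _ _ fun x => by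
            rw [h x, AddChar.zero_apply])
          have hcb : ‖c γ‖ ≤ K := hA γ hnt
          rw [norm_mul, norm_mul, Complex.norm_mul_self_eq_normSq, mul_comm]
          exact mul_le_mul hcb le_rfl (Complex.normSq_nonneg _) hK0
      _ ≤ ∑ γ : AddChar G ℂ, K * Complex.normSq (t γ) := by
          refine Finset.sum_le_sum_of_subset_of_nonneg (Finset.subset_univ _)
            fun γ _ _ => mul_nonneg hK0 (Complex.normSq_nonneg _)
      _ = K * ((N : ℝ) * S.card) := by rw [← Finset.mul_sum, parsR]
  have habs : |(C : ℝ) - (A.card : ℝ) * (S.card : ℝ) ^ 2 / (N : ℝ)|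
      = ‖E‖ / (N : ℝ) := by
    rw [← Real.norm_eq_abs, ← Complex.norm_real]
    push_cast at hD ⊢
    rw [hD, norm_div, Complex.norm_natCast]
  rw [hC] at habs
  rw [habs]
  rw [div_le_iff₀ hNR]
  calc ‖E‖ ≤ K * ((N : ℝ) * S.card) := hEb
    _ = K * S.card * N := by ring
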